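/- (Theorem 2.1, first identity, q-case.) Let n ∈ ℕ, α₁, α₂ ∈ (0,1) and let m₁ be a natural number with m₁ ≤ n. Then the m₁-th q-factorial moment of the first coordinate of the q-trinomial distribution of the first kind satisfies ∑_{y₁=0}^{n} ∑_{y₂=0}^{n−y₁} [y₁]_{m₁,q} · f(y₁,y₂) = [n]_{m₁,q} · α₁^{m₁} · q^{b(m₁)} / ⟨1⊕α₁⟩_{m₁}. -/

import Mathlib

open Finset

/-- q-integer `[k]_q = (1 - q^k)/(1 - q)`. -/
noncomputable def qInt (q : ℝ) (k : ℤ) : ℝ := (1 - q ^ k) / (1 - q)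

/-- q-factorial `[n]_q! = ∏_{i=1}^n [i]_q`. -/
noncomputable def qFact (q : ℝ) (n : ℕ) : ℝ := ∏ i ∈ Finset.Icc 1 n, qInt q (i : ℤ)

/-- q-binomial coefficient `C_q(n,k)`. -/
noncomputable def qBinom (q : ℝ) (n k : ℕ) : ℝ := qFact q n / (qFact q k * qFact q (n - k))

/-- q-falling factorial `[u]_{m,q} = ∏_{i=1}^m [u-i+1]_q`. -/
noncomputable def qFall (q : ℝ) (u : ℤ) (m : ℕ) : ℝ := ∏ i ∈ Finset.Icc 1 m, qInt q (u - (i : ℤ) + 1)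

/-- `[k]_{q⁻¹} = q^{1-k} · [k]_q`. -/
noncomputable def qIntInv (q : ℝ) (k : ℤ) : ℝ := q ^ (1 - k) * qInt q k

/-- `[u]_{m,q⁻¹} = ∏_{i=1}^m [u-i+1]_{q⁻¹}`. -/
noncomputable def qFallInv (q : ℝ) (u : ℤ) (m : ℕ) : ℝ := ∏ i ∈ Finset.Icc 1 m, qIntInv q (u - (i : ℤ) + 1)

/-- `b(k) = k(k-1)/2`. -/
def bb (k : ℕ) : ℕ := k * (k - 1) / 2

/-- `⟨1 ⊕ α⟩_m = ∏_{i=1}^m (1 + α q^{i-1})`. -/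
noncomputable def oplus (q α : ℝ) (m : ℕ) : ℝ := ∏ i ∈ Finset.Icc 1 m, (1 + α * q ^ (i - 1))

/-- `⟨1 ⊖ β⟩_m = ∏_{i=1}^m (1 - β q^{i-1})`. -/
noncomputable def ominus (q β : ℝ) (m : ℕ) : ℝ := ∏ i ∈ Finset.Icc 1 m, (1 - β * q ^ (i - 1))

/-- q-trinomial coefficient `T_q(n; x₁, x₂)`. -/
noncomputable def qTri (q : ℝ) (n x1 x2 : ℕ) : ℝ :=
  qFact q n / (qFact q x1 * qFact q x2 * qFact q (n - x1 - x2))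

/-- pmf of the q-trinomial distribution of the first kind. -/
noncomputable def fpmf (q a1 a2 : ℝ) (n y1 y2 : ℕ) : ℝ :=
  qTri q n y1 y2 * a1 ^ y1 * a2 ^ y2 * q ^ (bb y1 + bb y2) /
    (oplus q a1 n * oplus q a2 (n - y1))

/-! ### Auxiliary lemmas -/

lemma qInt_natCast (q : ℝ) (k : ℕ) : qInt q (k : ℤ) = (1 - q ^ k) / (1 - q) := by
  rw [qInt, zpow_natCast]

lemma qInt_zero (q : ℝ) : qInt q 0 = 0 := by simp [qInt]

lemma qInt_pos {q : ℝ} (hq0 : 0 < q) (hq1 : q < 1) {k : ℕ} (hk : 1 ≤ k) :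
    0 < qInt q (k : ℤ) := by
  rw [qInt_natCast]
  have h1 : q ^ k < 1 := pow_lt_one₀ hq0.le hq1 (by omega)
  exact div_pos (by linarith) (by linarith)

lemma qFact_succ (q : ℝ) (n : ℕ) : qFact q (n+1) = qFact q n * qInt q ((n+1 : ℕ) : ℤ) := by
  rw [qFact, qFact, Finset.prod_Icc_succ_top (by omega : 1 ≤ n + 1)]

lemma qFact_pos {q : ℝ} (hq0 : 0 < q) (hq1 : q < 1) (n : ℕ) : 0 < qFact q n := by
  induction n with
  | zero => simp [qFact]
  | succ n ih => rw [qFact_succ]; exact mul_pos ih (qInt_pos hq0 hq1 (by omega))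

lemma qInt_add_formula {q : ℝ} (hq : (1:ℝ) - q ≠ 0) {a b : ℕ} :
    qInt q ((a + b : ℕ) : ℤ) = qInt q (a : ℤ) + q ^ a * qInt q (b : ℤ) := by
  rw [qInt_natCast, qInt_natCast, qInt_natCast]
  have hnum : 1 - q ^ (a + b) = (1 - q ^ a) + q ^ a * (1 - q ^ b) := by
    rw [pow_add]; ring
  rw [hnum, add_div, mul_div_assoc]

lemma pascal {q : ℝ} (hq0 : 0 < q) (hq1 : q < 1) {n k : ℕ} (hk : k < n) :
    qBinom q (n+1) (k+1) = qBinom q n (k+1) + q ^ (n-k) * qBinom q n k := by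
  have hq : (1:ℝ) - q ≠ 0 := by linarith
  have h1 : n + 1 - (k+1) = n - k := by omega
  have h2 : n - (k+1) = n - k - 1 := by omega
  have h3 : n - k = (n - k - 1) + 1 := by omega
  unfold qBinom
  rw [h1, h2, qFact_succ]
  rw [show ((n : ℕ) + 1) = ((n - k - 1) + 1) + (k + 1) from by omega]
  rw [qInt_add_formula hq]
  rw [← h3]
  rw [h3, qFact_succ q (n - k - 1), ← h3, qFact_succ q k]
  have p1 := (qFact_pos hq0 hq1 (n-k-1)).ne'
  have p2 := (qFact_pos hq0 hq1 k).ne'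
  have p3 := (qInt_pos hq0 hq1 (k := n - k) (by omega)).ne'
  have p4 := (qInt_pos hq0 hq1 (k := k + 1) (by omega)).ne'
  set A := qInt q ((n - k : ℕ) : ℤ) with hA
  set B := qInt q ((k + 1 : ℕ) : ℤ) with hB
  field_simp

lemma bb_eq_sum (k : ℕ) : bb k = ∑ i ∈ Finset.range k, i := by
  have h := Finset.sum_range_id_mul_two k
  unfold bb
  omega

lemma bb_succ (k : ℕ) : bb (k+1) = bb k + k := by
  rw [bb_eq_sum, bb_eq_sum, Finset.sum_range_succ]

lemma bb_add (m z : ℕ) : bb (m + z) = bb m + m * z + bb z := by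
  induction z with
  | zero => simp [bb]
  | succ z ih =>
    rw [show m + (z+1) = (m+z) + 1 from rfl, bb_succ, ih, bb_succ, Nat.mul_succ]
    ring

lemma qBinom_zero {q : ℝ} (hq0 : 0 < q) (hq1 : q < 1) (n : ℕ) : qBinom q n 0 = 1 := by
  have := (qFact_pos hq0 hq1 n).ne'
  simp only [qBinom, Nat.sub_zero]
  rw [show qFact q 0 = 1 from by simp [qFact], one_mul, div_self this]

lemma qBinom_self {q : ℝ} (hq0 : 0 < q) (hq1 : q < 1) (n : ℕ) : qBinom q n n = 1 := by
  have := (qFact_pos hq0 hq1 n).ne'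
  simp only [qBinom, Nat.sub_self]
  rw [show qFact q 0 = 1 from by simp [qFact], mul_one, div_self this]

lemma oplus_succ (q α : ℝ) (n : ℕ) : oplus q α (n+1) = oplus q α n * (1 + α * q ^ n) := by
  rw [oplus, oplus, Finset.prod_Icc_succ_top (by omega : 1 ≤ n + 1)]
  norm_num

/-- Gauss's q-binomial theorem. -/
lemma gauss {q : ℝ} (hq0 : 0 < q) (hq1 : q < 1) (n : ℕ) (t : ℝ) :
    ∑ k ∈ Finset.range (n+1), qBinom q n k * q ^ (bb k) * t ^ k = oplus q t n := by
  induction n with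
  | zero => simp [qBinom_zero hq0 hq1, bb, oplus]
  | succ n ih =>
    rw [Finset.sum_range_succ', Finset.sum_range_succ]
    have hterm : ∀ k ∈ Finset.range n,
        qBinom q (n+1) (k+1) * q ^ (bb (k+1)) * t ^ (k+1)
        = qBinom q n (k+1) * q ^ (bb (k+1)) * t ^ (k+1)
          + (t * q ^ n) * (qBinom q n k * q ^ (bb k) * t ^ k) := by
      intro k hk
      rw [Finset.mem_range] at hk
      rw [pascal hq0 hq1 hk]
      have he : q ^ (n - k) * q ^ (bb (k+1)) = q ^ n * q ^ (bb k) := by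
        rw [← pow_add, ← pow_add]; congr 1; rw [bb_succ]; omega
      calc (qBinom q n (k+1) + q ^ (n-k) * qBinom q n k) * q ^ (bb (k+1)) * t ^ (k+1)
          = qBinom q n (k+1) * q ^ (bb (k+1)) * t ^ (k+1)
            + qBinom q n k * (q ^ (n-k) * q ^ (bb (k+1))) * t ^ (k+1) := by ring
        _ = _ := by rw [he]; ring
    rw [Finset.sum_congr rfl hterm, Finset.sum_add_distrib, ← Finset.mul_sum]
    rw [oplus_succ]
    have e1 : ∑ k ∈ Finset.range (n+1), qBinom q n k * q ^ (bb k) * t ^ k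
        = (∑ k ∈ Finset.range n, qBinom q n (k+1) * q ^ (bb (k+1)) * t ^ (k+1))
          + qBinom q n 0 * q ^ (bb 0) * t ^ 0 := Finset.sum_range_succ' _ n
    have e2 : ∑ k ∈ Finset.range (n+1), qBinom q n k * q ^ (bb k) * t ^ k
        = (∑ k ∈ Finset.range n, qBinom q n k * q ^ (bb k) * t ^ k)
          + qBinom q n n * q ^ (bb n) * t ^ n := Finset.sum_range_succ _ n
    have hb0 : qBinom q (n+1) 0 * q ^ (bb 0) * t ^ 0 = qBinom q n 0 * q ^ (bb 0) * t ^ 0 := by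
      rw [qBinom_zero hq0 hq1, qBinom_zero hq0 hq1]
    have htop : qBinom q (n+1) (n+1) * q ^ (bb (n+1)) * t ^ (n+1)
        = (t * q ^ n) * (qBinom q n n * q ^ (bb n) * t ^ n) := by
      rw [qBinom_self hq0 hq1, qBinom_self hq0 hq1, bb_succ, pow_add]
      ring
    rw [hb0, htop]
    linear_combination (-1:ℝ) * e1 - (t*q^n) * e2 + (1 + t*q^n) * ih

lemma qFall_succ (q : ℝ) (u : ℤ) (m : ℕ) :
    qFall q u (m+1) = qFall q u m * qInt q (u - (m+1 : ℕ) + 1) := by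
  rw [qFall, qFall, Finset.prod_Icc_succ_top (by omega : 1 ≤ m + 1)]

lemma qFall_eq_zero {q : ℝ} {y m : ℕ} (h : y < m) : qFall q (y : ℤ) m = 0 := by
  rw [qFall]
  apply Finset.prod_eq_zero (i := y + 1) (by simp [Finset.mem_Icc]; omega)
  rw [show ((y:ℤ) - ((y+1 : ℕ) : ℤ) + 1) = 0 from by push_cast; ring, qInt_zero]

lemma qFall_eq_div {q : ℝ} (hq0 : 0 < q) (hq1 : q < 1) {y m : ℕ} (h : m ≤ y) :
    qFall q (y : ℤ) m = qFact q y / qFact q (y - m) := by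
  induction m with
  | zero => simp [qFall, div_self (qFact_pos hq0 hq1 y).ne']
  | succ m ih =>
    have hm : m ≤ y := by omega
    rw [qFall_succ, ih hm]
    have hc : (y:ℤ) - ((m+1 : ℕ) : ℤ) + 1 = ((y - m : ℕ) : ℤ) := by push_cast; omega
    rw [hc]
    have h2 : y - m = (y - (m+1)) + 1 := by omega
    rw [h2, qFact_succ, ← h2]
    have p1 := (qFact_pos hq0 hq1 (y - (m+1))).ne'
    have p2 := (qInt_pos hq0 hq1 (k := y - m) (by omega)).ne'
    set B := qInt q ((y - m : ℕ) : ℤ) with hB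
    field_simp

lemma oplus_pos {q α : ℝ} (hq0 : 0 < q) (hα : 0 < α) (m : ℕ) : 0 < oplus q α m := by
  apply Finset.prod_pos
  intro i _
  have : 0 < α * q ^ (i-1) := mul_pos hα (pow_pos hq0 _)
  linarith

lemma oplus_add (q α : ℝ) (m d : ℕ) :
    oplus q α (m + d) = oplus q α m * oplus q (α * q ^ m) d := by
  induction d with
  | zero => simp [oplus]
  | succ d ih =>
    rw [show m + (d+1) = (m+d)+1 from rfl, oplus_succ, ih, oplus_succ, pow_add]
    ring

lemma qTri_eq {q : ℝ} (hq0 : 0 < q) (hq1 : q < 1) (n y1 y2 : ℕ) :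
    qTri q n y1 y2 = qBinom q n y1 * qBinom q (n - y1) y2 := by
  unfold qTri qBinom
  have p0 := (qFact_pos hq0 hq1 (n - y1)).ne'
  have p1 := (qFact_pos hq0 hq1 y1).ne'
  have p2 := (qFact_pos hq0 hq1 y2).ne'
  have p3 := (qFact_pos hq0 hq1 (n - y1 - y2)).ne'
  field_simp

theorem stmt0 (q : ℝ) (hq0 : 0 < q) (hq1 : q < 1) (n : ℕ) (α1 α2 : ℝ)
    (hα1 : 0 < α1) (hα1' : α1 < 1) (hα2 : 0 < α2) (hα2' : α2 < 1)
    (m1 : ℕ) (hm1 : m1 ≤ n) :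
    ∑ y1 ∈ Finset.range (n + 1), ∑ y2 ∈ Finset.range (n - y1 + 1),
      qFall q (y1 : ℤ) m1 * fpmf q α1 α2 n y1 y2
      = qFall q (n : ℤ) m1 * α1 ^ m1 * q ^ bb m1 / oplus q α1 m1 := by
  have hOn := (oplus_pos (α := α1) hq0 hα1 n).ne'
  -- Step 1: compute the inner sums
  have hinner : ∀ y1, ∑ y2 ∈ Finset.range (n - y1 + 1),
      qFall q (y1 : ℤ) m1 * fpmf q α1 α2 n y1 y2
      = qFall q (y1 : ℤ) m1 * qBinom q n y1 * α1 ^ y1 * q ^ (bb y1) / oplus q α1 n := by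
    intro y1
    have hO2 := (oplus_pos (α := α2) hq0 hα2 (n - y1)).ne'
    have hterm : ∀ y2, qFall q (y1 : ℤ) m1 * fpmf q α1 α2 n y1 y2
        = (qBinom q (n - y1) y2 * q ^ (bb y2) * α2 ^ y2) *
          (qFall q (y1 : ℤ) m1 * qBinom q n y1 * α1 ^ y1 * q ^ (bb y1) /
            (oplus q α1 n * oplus q α2 (n - y1))) := by
      intro y2
      rw [fpmf, qTri_eq hq0 hq1, pow_add]
      ring
    calc ∑ y2 ∈ Finset.range (n - y1 + 1), qFall q (y1 : ℤ) m1 * fpmf q α1 α2 n y1 y2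
        = (∑ y2 ∈ Finset.range (n - y1 + 1), qBinom q (n - y1) y2 * q ^ (bb y2) * α2 ^ y2) *
          (qFall q (y1 : ℤ) m1 * qBinom q n y1 * α1 ^ y1 * q ^ (bb y1) /
            (oplus q α1 n * oplus q α2 (n - y1))) := by
          rw [Finset.sum_mul]
          exact Finset.sum_congr rfl fun y2 _ => hterm y2
      _ = oplus q α2 (n - y1) *
          (qFall q (y1 : ℤ) m1 * qBinom q n y1 * α1 ^ y1 * q ^ (bb y1) /
            (oplus q α1 n * oplus q α2 (n - y1))) := by rw [gauss hq0 hq1]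
      _ = qFall q (y1 : ℤ) m1 * qBinom q n y1 * α1 ^ y1 * q ^ (bb y1) / oplus q α1 n := by
          field_simp
  simp only [hinner]
  -- Step 2: the outer sum
  have houter : ∑ y1 ∈ Finset.range (n + 1),
      qFall q (y1 : ℤ) m1 * qBinom q n y1 * α1 ^ y1 * q ^ (bb y1)
      = qFall q (n : ℤ) m1 * α1 ^ m1 * q ^ (bb m1) * oplus q (α1 * q ^ m1) (n - m1) := by
    have hsplit : n + 1 = m1 + (n - m1 + 1) := by omega
    rw [hsplit, Finset.sum_range_add]
    have hzero : ∑ y1 ∈ Finset.range m1,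
        qFall q (y1 : ℤ) m1 * qBinom q n y1 * α1 ^ y1 * q ^ (bb y1) = 0 := by
      apply Finset.sum_eq_zero
      intro y hy
      rw [Finset.mem_range] at hy
      rw [qFall_eq_zero hy]
      ring
    rw [hzero, zero_add]
    have hterm : ∀ z, qFall q ((m1 + z : ℕ) : ℤ) m1 * qBinom q n (m1 + z) *
          α1 ^ (m1 + z) * q ^ (bb (m1 + z))
        = (qFall q (n : ℤ) m1 * α1 ^ m1 * q ^ (bb m1)) *
          (qBinom q (n - m1) z * q ^ (bb z) * (α1 * q ^ m1) ^ z) := by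
      intro z
      rw [qFall_eq_div hq0 hq1 (Nat.le_add_right m1 z), qFall_eq_div hq0 hq1 hm1]
      rw [show m1 + z - m1 = z from by omega]
      unfold qBinom
      rw [show n - (m1 + z) = n - m1 - z from by omega]
      rw [bb_add]
      rw [show (α1 * q ^ m1) ^ z = α1 ^ z * q ^ (m1 * z) from by rw [mul_pow, ← pow_mul]]
      rw [pow_add α1 m1 z, pow_add, pow_add]
      have p1 := (qFact_pos hq0 hq1 (m1 + z)).ne'
      have p2 := (qFact_pos hq0 hq1 z).ne'
      have p3 := (qFact_pos hq0 hq1 (n - m1)).ne'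
      have p4 := (qFact_pos hq0 hq1 (n - m1 - z)).ne'
      field_simp
    rw [Finset.sum_congr rfl fun z _ => hterm z, ← Finset.mul_sum, gauss hq0 hq1]
  -- Step 3: combine
  rw [← Finset.sum_div, houter]
  have hOsplit : oplus q α1 n = oplus q α1 m1 * oplus q (α1 * q ^ m1) (n - m1) := by
    rw [← oplus_add, Nat.add_sub_cancel' hm1]
  have hOm := (oplus_pos (α := α1) hq0 hα1 m1).ne'
  have hOd := (oplus_pos (α := α1 * q ^ m1) hq0 (mul_pos hα1 (pow_pos hq0 m1)) (n - m1)).ne'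
  rw [hOsplit]
  field_simp
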